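/- arXiv:2102.08674 — 6 statements merged into one kernel-verified Lean document; each statement's English description precedes it below -/
import Mathlib

section
/- Every derivation of the polynomial ring k[x₁,...,xₙ] over a field k of characteristic zero can be written as a single Lie bracket of two derivations; concretely, for any derivation μ there exist derivations δ₁, δ₂ with μ = δ₁∘δ₂ - δ₂∘δ₁. -/
open MvPolynomial

/-- In characteristic zero, every multivariate polynomial has an antiderivative
with respect to any chosen variable. -/
lemma exists_antideriv {k : Type*} [Field k] [CharZero k] {σ : Type*} [DecidableEq σ]
    (i : σ) (f : MvPolynomial σ k) :
    ∃ g : MvPolynomial σ k, MvPolynomial.pderiv i g = f := by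
  induction f using MvPolynomial.induction_on' with
  | monomial a c =>
      refine ⟨monomial (a + Finsupp.single i 1) (c / ((a i : k) + 1)), ?_⟩
      rw [pderiv_monomial]
      have h : ((a i : k) + 1) ≠ 0 := Nat.cast_add_one_ne_zero _
      congr 1
      · simp
      · push_cast [Finsupp.add_apply, Finsupp.single_eq_same]
        rw [div_mul_cancel₀ _ h]
  | add p q hp hq =>
      obtain ⟨gp, hgp⟩ := hp
      obtain ⟨gq, hgq⟩ := hq
      exact ⟨gp + gq, by simp [hgp, hgq]⟩

/-- Every derivation of the polynomial ring `k[x₁,...,xₙ]` over a field `k` of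
characteristic zero is a single Lie bracket of two derivations:
`μ = δ₁∘δ₂ - δ₂∘δ₁`. -/
theorem derivation_mvPolynomial_is_single_bracket
    (k : Type*) [Field k] [CharZero k] (n : ℕ)
    (μ : Derivation k (MvPolynomial (Fin n) k) (MvPolynomial (Fin n) k)) :
    ∃ δ₁ δ₂ : Derivation k (MvPolynomial (Fin n) k) (MvPolynomial (Fin n) k),
      ∀ f : MvPolynomial (Fin n) k, μ f = δ₁ (δ₂ f) - δ₂ (δ₁ f) := by
  cases n with
  | zero =>
      refine ⟨0, 0, fun f => ?_⟩
      have hμ : μ = 0 := by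
        apply MvPolynomial.derivation_ext
        exact fun i => Fin.elim0 i
      simp [hμ]
  | succ m =>
      -- pick antiderivatives of -μ(Xᵢ) with respect to x₀
      choose g hg using fun i : Fin (m + 1) => exists_antideriv (0 : Fin (m + 1)) (-(μ (X i)))
      refine ⟨MvPolynomial.mkDerivation k g, MvPolynomial.pderiv 0, fun f => ?_⟩
      have key : μ = ⁅MvPolynomial.mkDerivation k g, MvPolynomial.pderiv (0 : Fin (m+1))⁆ := by
        apply MvPolynomial.derivation_ext
        intro i
        rw [Derivation.commutator_apply]
        rw [MvPolynomial.pderiv_X, MvPolynomial.mkDerivation_X, hg]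
        rcases eq_or_ne (0 : Fin (m+1)) i with h | h
        · simp [h, Pi.single_apply]
        · simp [Pi.single_apply, h]
      rw [key, Derivation.commutator_apply]
end

section
/- Every derivation of the Laurent polynomial ring k[x,x⁻¹] over a field k of characteristic zero can be written as a single Lie bracket of two derivations. -/
open LaurentPolynomial AddMonoidAlgebra Finsupp

noncomputable section LaurentAux

variable {k : Type*} [Field k] [CharZero k]

/-- The formal derivative of a Laurent polynomial, as a `k`-linear map. -/
noncomputable def laurentDlin (k : Type*) [Field k] :
    LaurentPolynomial k →ₗ[k] LaurentPolynomial k :=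
  Finsupp.lsum k (fun n : ℤ =>
    LinearMap.toSpanSingleton k (LaurentPolynomial k) ((n : k) • (T (n - 1) : LaurentPolynomial k))) ∘ₗ
    (AddMonoidAlgebra.coeffLinearEquiv k).toLinearMap

lemma laurentDlin_single (n : ℤ) (a : k) :
    laurentDlin k (AddMonoidAlgebra.single n a)
      = (a * (n : k)) • (T (n - 1) : LaurentPolynomial k) := by
  rw [laurentDlin, LinearMap.comp_apply, LinearEquiv.coe_coe,
    AddMonoidAlgebra.coeffLinearEquiv_apply, AddMonoidAlgebra.coeff_single]
  erw [Finsupp.lsum_single]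
  rw [LinearMap.toSpanSingleton_apply, smul_smul]

lemma laurentDlin_T (n : ℤ) :
    laurentDlin k (T n : LaurentPolynomial k) = (n : k) • (T (n - 1) : LaurentPolynomial k) := by
  have : (T n : LaurentPolynomial k) = AddMonoidAlgebra.single n 1 := rfl
  rw [this, laurentDlin_single, one_mul]

lemma smul_T_eq_single (a : k) (n : ℤ) :
    a • (T n : LaurentPolynomial k) = AddMonoidAlgebra.single n a := by
  have : (T n : LaurentPolynomial k) = AddMonoidAlgebra.single n 1 := rfl
  rw [this, AddMonoidAlgebra.smul_single', mul_one]

lemma laurentDlin_leibniz (p q : LaurentPolynomial k) :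
    laurentDlin k (p * q) = p • laurentDlin k q + q • laurentDlin k p := by
  have key : ∀ (m n : ℤ) (a b : k),
      laurentDlin k (AddMonoidAlgebra.single m a * AddMonoidAlgebra.single n b) =
        AddMonoidAlgebra.single m a • laurentDlin k (AddMonoidAlgebra.single n b)
          + AddMonoidAlgebra.single n b • laurentDlin k (AddMonoidAlgebra.single m a) := by
    intro m n a b
    rw [AddMonoidAlgebra.single_mul_single, laurentDlin_single, laurentDlin_single,
      laurentDlin_single]
    rw [smul_eq_mul, smul_eq_mul, ← smul_T_eq_single a m, ← smul_T_eq_single b n]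
    rw [smul_mul_assoc, smul_mul_assoc, mul_smul_comm, mul_smul_comm, ← T_add, ← T_add,
      smul_smul, smul_smul]
    have h1 : m + (n - 1) = m + n - 1 := by ring
    have h2 : n + (m - 1) = m + n - 1 := by ring
    rw [h1, h2, ← add_smul]
    congr 1
    push_cast
    ring
  induction p using AddMonoidAlgebra.induction_linear with
  | zero => simp
  | add f g hf hg =>
    rw [add_mul, map_add, hf, hg, add_smul, map_add, smul_add]
    abel
  | single m a =>
    induction q using AddMonoidAlgebra.induction_linear with
    | zero => simp
    | add f g hf hg =>
      rw [mul_add, map_add, hf, hg, map_add, smul_add, add_smul]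
      abel
    | single n b => exact key m n a b

/-- The formal derivative as a derivation. -/
noncomputable def laurentDer (k : Type*) [Field k] [CharZero k] :
    Derivation k (LaurentPolynomial k) (LaurentPolynomial k) :=
  Derivation.mk' (laurentDlin k) laurentDlin_leibniz

lemma laurentDer_apply (p : LaurentPolynomial k) : laurentDer k p = laurentDlin k p := rfl

lemma adjoin_T_pair :
    Algebra.adjoin k {(T 1 : LaurentPolynomial k), T (-1)} = ⊤ := by
  rw [eq_top_iff]
  rintro p -
  induction p using LaurentPolynomial.induction_on' with
  | add p q hp hq => exact add_mem hp hq
  | C_mul_T n a =>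
    have hT : ∀ n : ℤ, (T n : LaurentPolynomial k) ∈
        Algebra.adjoin k {(T 1 : LaurentPolynomial k), T (-1)} := by
      intro n
      obtain ⟨m, rfl | rfl⟩ := n.eq_nat_or_neg
      · have : (T (m : ℤ) : LaurentPolynomial k) = T 1 ^ m := by
          rw [T_pow, mul_one]
        rw [this]
        exact pow_mem (Algebra.subset_adjoin (by simp)) m
      · have : (T (-(m : ℤ)) : LaurentPolynomial k) = T (-1) ^ m := by
          rw [T_pow]
          congr 1
          omega
        rw [this]
        exact pow_mem (Algebra.subset_adjoin (by simp)) m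
    rw [LaurentPolynomial.C_eq_algebraMap]
    exact mul_mem (Subalgebra.algebraMap_mem _ a) (hT n)

lemma derivation_T_neg_one (D : Derivation k (LaurentPolynomial k) (LaurentPolynomial k)) :
    D (T (-1)) = -((T (-2) : LaurentPolynomial k) * D (T 1)) := by
  have hmul : (T (-1) : LaurentPolynomial k) * T 1 = 1 := by
    rw [← T_add]; norm_num
  have h2 := D.leibniz (T 1 : LaurentPolynomial k) (T (-1))
  rw [show (T 1 : LaurentPolynomial k) * T (-1) = 1 by rw [← T_add]; norm_num,
    Derivation.map_one_eq_zero] at h2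
  have h3 := congrArg (fun x => (T (-1) : LaurentPolynomial k) * x) h2.symm
  simp only [smul_eq_mul, mul_add, ← mul_assoc, hmul, one_mul, mul_zero] at h3
  rw [← T_add] at h3
  norm_num at h3
  linear_combination h3

lemma laurent_derivation_ext
    {D1 D2 : Derivation k (LaurentPolynomial k) (LaurentPolynomial k)}
    (h : D1 (T 1) = D2 (T 1)) : D1 = D2 := by
  refine Derivation.ext_of_adjoin_eq_top _ adjoin_T_pair ?_
  rintro x hx
  rcases hx with rfl | hx
  · exact h
  · rcases hx with rfl
    rw [derivation_T_neg_one, derivation_T_neg_one, h]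

lemma smul_laurentDer_T_one (g : LaurentPolynomial k) :
    (g • laurentDer k) (T 1) = g := by
  rw [Derivation.smul_apply, laurentDer_apply, laurentDlin_T]
  norm_num [T_zero, smul_eq_mul]

end LaurentAux

/-- Every derivation of the Laurent polynomial ring `k[x,x⁻¹]` over a field `k`
of characteristic zero is a single Lie bracket of two derivations. -/
theorem derivation_laurent_is_single_bracket
    (k : Type*) [Field k] [CharZero k]
    (μ : Derivation k (LaurentPolynomial k) (LaurentPolynomial k)) :
    ∃ δ₁ δ₂ : Derivation k (LaurentPolynomial k) (LaurentPolynomial k),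
      μ = ⁅δ₁, δ₂⁆ := by
  classical
  set f : LaurentPolynomial k := μ (T 1) with hf
  obtain ⟨s, hs1, hsm⟩ : ∃ s : ℤ, 1 ≤ s ∧ ∀ m ∈ f.coeff.support, m < s := by
    refine ⟨((f.coeff.support.sup Int.toNat : ℕ) : ℤ) + 1, by omega, ?_⟩
    intro m hm
    have h1 : m.toNat ≤ f.coeff.support.sup Int.toNat := Finset.le_sup hm
    have h2 : m ≤ (m.toNat : ℤ) := Int.self_le_toNat m
    omega
  have hms : ∀ m ∈ f.coeff.support, ((m : k) - 2 * s + 1) ≠ 0 := by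
    intro m hm hc
    have h2 : (m : k) = ((2 * s - 1 : ℤ) : k) := by push_cast; linear_combination hc
    have h3 : m = 2 * s - 1 := by exact_mod_cast h2
    have := hsm m hm
    omega
  set h : LaurentPolynomial k :=
    f.coeff.sum (fun m a => (a / ((m : k) - 2 * s + 1)) • (T (m - s + 1) : LaurentPolynomial k))
    with hh
  refine ⟨(T s : LaurentPolynomial k) • laurentDer k, h • laurentDer k, ?_⟩
  refine (laurent_derivation_ext ?_).symm
  rw [Derivation.commutator_apply, smul_laurentDer_T_one, smul_laurentDer_T_one, ← hf]
  rw [Derivation.smul_apply, Derivation.smul_apply, laurentDer_apply, laurentDer_apply,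
    laurentDlin_T, smul_eq_mul, smul_eq_mul]
  rw [hh, map_finsuppSum, Finsupp.mul_sum, Finsupp.sum_mul, ← Finsupp.sum_sub]
  conv_rhs => rw [← AddMonoidAlgebra.sum_coeff_single f]
  apply Finsupp.sum_congr
  intro m hm
  rw [map_smul, laurentDlin_T]
  rw [smul_smul, mul_smul_comm, mul_smul_comm, smul_mul_assoc, smul_smul, ← T_add, ← T_add]
  have e1 : s + (m - s + 1 - 1) = m := by ring
  have e2 : m - s + 1 + (s - 1) = m := by ring
  rw [e1, e2, ← sub_smul, smul_T_eq_single]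
  congr 1
  have hc := hms m hm
  field_simp
  push_cast
  ring
end

section
/- Let C = A¹ \ {p₁,...,pₙ} be the complement of n ≥ 1 distinct points in the affine line over an algebraically closed field k of characteristic zero, with coordinate ring R = k[x, (∏ᵢ(x-pᵢ))⁻¹]. Then every derivation of R can be written as a sum of two Lie brackets: μ = [∂ₓ, ν] + [x∂ₓ, δ] for suitable derivations ν, δ. -/
open Polynomial

lemma aux_deriv_poly {k R : Type*} [CommRing k] [CommRing R] [Algebra k R]
    [Algebra (Polynomial k) R] [IsScalarTower k (Polynomial k) R]
    (D : Derivation k R R) (q : Polynomial k) :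
    D (algebraMap (Polynomial k) R q) =
      algebraMap (Polynomial k) R (derivative q) * D (algebraMap (Polynomial k) R X) := by
  induction q using Polynomial.induction_on with
  | C a =>
      have : algebraMap (Polynomial k) R (C a) = algebraMap k R a := by
        rw [IsScalarTower.algebraMap_apply k (Polynomial k) R, Polynomial.algebraMap_eq]
      rw [this, Derivation.map_algebraMap, derivative_C, map_zero, zero_mul]
  | add p q hp hq =>
      simp only [map_add, derivative_add, add_mul, hp, hq]
  | monomial n a ih =>
      rw [pow_succ, ← mul_assoc, map_mul, Derivation.leibniz, ih]
      simp only [derivative_mul, derivative_X, derivative_C, derivative_X_pow, smul_eq_mul,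
        mul_one, map_add, map_mul, zero_mul, add_zero]
      ring

lemma aux_antideriv {k : Type*} [Field k] [CharZero k] (q : Polynomial k) :
    ∃ a : Polynomial k, derivative a = q := by
  induction q using Polynomial.induction_on with
  | C a => exact ⟨C a * X, by simp⟩
  | add p q hp hq =>
      obtain ⟨a, ha⟩ := hp; obtain ⟨b, hb⟩ := hq
      exact ⟨a + b, by simp [ha, hb]⟩
  | monomial n a _ =>
      have hne : ((n : k) + 2) ≠ 0 := by
        have := Nat.cast_ne_zero (R := k) (n := n + 2) |>.mpr (by omega)
        push_cast at this; exact this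
      refine ⟨C (a / ((n : k) + 2)) * X ^ (n + 2), ?_⟩
      rw [derivative_C_mul, derivative_X_pow, ← mul_assoc, ← C_mul]
      norm_num
      rw [← C_eq_natCast, ← C_add, ← C_mul, div_mul_cancel₀ _ hne]

lemma aux_ext {k R : Type*} [CommRing k] [CommRing R] [Algebra k R]
    [Algebra (Polynomial k) R] [IsScalarTower k (Polynomial k) R]
    (f : Polynomial k) [IsLocalization.Away f R]
    (D₁ D₂ : Derivation k R R)
    (h : D₁ (algebraMap (Polynomial k) R X) = D₂ (algebraMap (Polynomial k) R X)) :
    D₁ = D₂ := by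
  ext r
  obtain ⟨⟨a, s⟩, hs⟩ := IsLocalization.surj (Submonoid.powers f) r
  have hu : IsUnit (algebraMap (Polynomial k) R ↑s) := IsLocalization.map_units R s
  have hva : D₁ (algebraMap (Polynomial k) R a) = D₂ (algebraMap (Polynomial k) R a) := by
    rw [aux_deriv_poly D₁ a, h, ← aux_deriv_poly D₂ a]
  have hvs : D₁ (algebraMap (Polynomial k) R ↑s) = D₂ (algebraMap (Polynomial k) R ↑s) := by
    rw [aux_deriv_poly D₁ ↑s, h, ← aux_deriv_poly D₂ ↑s]
  have e1 : D₁ (r * algebraMap (Polynomial k) R ↑s) = D₁ (algebraMap (Polynomial k) R a) := by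
    rw [hs]
  have e2 : D₂ (r * algebraMap (Polynomial k) R ↑s) = D₂ (algebraMap (Polynomial k) R a) := by
    rw [hs]
  rw [Derivation.leibniz, hvs, hva] at e1
  rw [Derivation.leibniz] at e2
  have h3 := add_left_cancel (e1.trans e2.symm)
  rw [smul_eq_mul, smul_eq_mul] at h3
  exact hu.mul_left_cancel h3

section Aux

variable {k R : Type*} [CommRing k] [CommRing R] [Algebra k R]

/-- `g` can be written as `Dx a + (t * Dx b - b)`. -/
def Nice (Dx : Derivation k R R) (t : R) (g : R) : Prop :=
  ∃ a b : R, g = Dx a + (t * Dx b - b)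

lemma nice_dx (Dx : Derivation k R R) (t : R) (a : R) : Nice Dx t (Dx a) :=
  ⟨a, 0, by simp⟩

lemma nice_zero (Dx : Derivation k R R) (t : R) : Nice Dx t 0 :=
  ⟨0, 0, by simp⟩

lemma Nice.add {Dx : Derivation k R R} {t g₁ g₂ : R} (h₁ : Nice Dx t g₁)
    (h₂ : Nice Dx t g₂) : Nice Dx t (g₁ + g₂) := by
  obtain ⟨a₁, b₁, e₁⟩ := h₁
  obtain ⟨a₂, b₂, e₂⟩ := h₂
  exact ⟨a₁ + a₂, b₁ + b₂, by rw [e₁, e₂, map_add, map_add]; ring⟩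

lemma Nice.smul {Dx : Derivation k R R} {t g : R} (c : k) (h : Nice Dx t g) :
    Nice Dx t (c • g) := by
  obtain ⟨a, b, e⟩ := h
  refine ⟨c • a, c • b, ?_⟩
  rw [e, Derivation.map_smul, Derivation.map_smul, smul_add, smul_sub, mul_smul_comm]

lemma nice_sum {Dx : Derivation k R R} {t : R} {ι : Type*} (s : Finset ι) (g : ι → R)
    (h : ∀ i ∈ s, Nice Dx t (g i)) : Nice Dx t (∑ i ∈ s, g i) :=
  Finset.sum_induction g (Nice Dx t) (fun _ _ ha hb => ha.add hb) (nice_zero Dx t) h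

end Aux
/-- Let `C = 𝔸¹ \ {p₁,...,pₙ}` (n ≥ 1 distinct points, `k` algebraically closed of
characteristic zero), with coordinate ring `R = k[x, (∏ᵢ(x-pᵢ))⁻¹]`, realized as
the localization of `k[x]` away from `∏ᵢ (x - pᵢ)`.  Let `∂ₓ` and `x∂ₓ` be the
derivations of `R` sending (the image of) `x` to `1` and to `x` respectively.
Then every derivation `μ` of `R` can be written as `μ = [∂ₓ, ν] + [x∂ₓ, δ]` for
suitable derivations `ν, δ`. -/
theorem derivation_punctured_line_sum_two_brackets
    (k : Type*) [Field k] [IsAlgClosed k] [CharZero k]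
    (n : ℕ) (hn : 1 ≤ n) (p : Fin n → k) (hp : Function.Injective p)
    (R : Type*) [CommRing R] [Algebra k R] [Algebra (Polynomial k) R]
    [IsScalarTower k (Polynomial k) R]
    [IsLocalization.Away (∏ i : Fin n, (X - C (p i))) R]
    (Dx xDx : Derivation k R R)
    (hDx : Dx (algebraMap (Polynomial k) R X) = 1)
    (hxDx : xDx (algebraMap (Polynomial k) R X) = algebraMap (Polynomial k) R X)
    (μ : Derivation k R R) :
    ∃ ν δ : Derivation k R R, μ = ⁅Dx, ν⁆ + ⁅xDx, δ⁆ := by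
  classical
  set f : Polynomial k := ∏ i : Fin n, (X - C (p i)) with hfdef
  set φ : Polynomial k →+* R := (algebraMap (Polynomial k) R) with hφdef
  set t : R := φ X with htdef
  -- basic facts
  have hφC : ∀ c : k, φ (C c) = algebraMap k R c := by
    intro c
    rw [hφdef, IsScalarTower.algebraMap_apply k (Polynomial k) R c, Polynomial.algebraMap_eq]
  have hDx' : ∀ q : Polynomial k, Dx (φ q) = φ (derivative q) := by
    intro q
    rw [hφdef, aux_deriv_poly, hDx, mul_one]
  have hfu : IsUnit (φ f) :=
    IsLocalization.map_units R (⟨f, Submonoid.mem_powers f⟩ : Submonoid.powers f)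
  obtain ⟨u, hu⟩ := hfu
  set w : R := ↑u⁻¹ with hwdef
  have hw : φ f * w = 1 := by rw [← hu, hwdef]; exact u.mul_inv
  have hfw : ∀ j : ℕ, φ f * w ^ (j + 1) = w ^ j := by
    intro j
    rw [pow_succ, ← mul_assoc, mul_comm (φ f) (w ^ j), mul_assoc, hw, mul_one]
  have hmonic : f.Monic := monic_prod_of_monic _ _ fun i _ => monic_X_sub_C _
  have hdegf : f.degree = n := by
    rw [hfdef, degree_prod]
    simp [degree_X_sub_C]
  -- the basic generators
  have P_poly : ∀ q : Polynomial k, Nice Dx t (φ q) := by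
    intro q
    obtain ⟨a, ha⟩ := aux_antideriv q
    exact ⟨φ a, 0, by rw [hDx' a, ha]; simp⟩
  have P_w : ∀ (c : k) (v : R), (t - algebraMap k R c) * v = 1 → Nice Dx t v := by
    intro c v hv
    have hDxt : Dx t = 1 := hDx
    have hy : Dx (t - algebraMap k R c) = 1 := by
      rw [map_sub, Derivation.map_algebraMap, sub_zero, hDxt]
    have h1 : (t - algebraMap k R c) * Dx v + v = 0 := by
      have h0 := congrArg Dx hv
      rw [Derivation.leibniz, Derivation.map_one_eq_zero, hy, smul_eq_mul, smul_eq_mul,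
        mul_one] at h0
      exact h0
    have h1' : (t - algebraMap k R c) * Dx v = -v := eq_neg_of_add_eq_zero_left h1
    have h2 : Dx v = -(v * v) := by
      calc Dx v = ((t - algebraMap k R c) * v) * Dx v := by rw [hv, one_mul]
      _ = v * ((t - algebraMap k R c) * Dx v) := by ring
      _ = v * (-v) := by rw [h1']
      _ = -(v * v) := by ring
    refine ⟨(c * (2 : k)⁻¹) • v, (-(2 : k)⁻¹) • v, ?_⟩
    rw [Derivation.map_smul, Derivation.map_smul, h2]
    have hβ : algebraMap k R (2 : k)⁻¹ * 2 = 1 := by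
      rw [show ((2 : R)) = algebraMap k R 2 by rw [map_ofNat], ← map_mul,
        inv_mul_cancel₀ (two_ne_zero), map_one]
    simp only [Algebra.smul_def, map_mul, map_neg]
    linear_combination (-(algebraMap k R (2 : k)⁻¹ * v)) * hv - v * hβ
  -- Lagrange step: low degree polynomials divided by f
  have P_lag : ∀ r : Polynomial k, r.degree < (n : WithBot ℕ) → Nice Dx t (φ r * w) := by
    intro r hr
    have hrint := Lagrange.eq_interpolate (s := Finset.univ) (v := p)
      (Set.injOn_of_injective hp) (f := r) (by rw [Finset.card_univ, Fintype.card_fin]; exact hr)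
    rw [hrint, Lagrange.interpolate_apply, map_sum, Finset.sum_mul]
    refine nice_sum _ _ fun i _ => ?_
    have hbasis : Lagrange.basis Finset.univ p i =
        C (∏ j ∈ Finset.univ.erase i, (p i - p j)⁻¹) *
          ∏ j ∈ Finset.univ.erase i, (X - C (p j)) := by
      rw [Lagrange.basis]
      unfold Lagrange.basisDivisor
      rw [Finset.prod_mul_distrib, map_prod]
    set g : Polynomial k := ∏ j ∈ Finset.univ.erase i, (X - C (p j)) with hgdef
    have hgf : (X - C (p i)) * g = f := by
      rw [hgdef, hfdef]
      exact Finset.mul_prod_erase Finset.univ (fun j => X - C (p j)) (Finset.mem_univ i)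
    have hginv : (t - algebraMap k R (p i)) * (φ g * w) = 1 := by
      have : t - algebraMap k R (p i) = φ (X - C (p i)) := by
        rw [map_sub, hφC, htdef]
      rw [this, ← mul_assoc, ← map_mul, hgf, hw]
    have hNg : Nice Dx t (φ g * w) := P_w (p i) _ hginv
    have : φ (C (eval (p i) r) * Lagrange.basis Finset.univ p i) * w =
        (eval (p i) r * ∏ j ∈ Finset.univ.erase i, (p i - p j)⁻¹) • (φ g * w) := by
      rw [hbasis, ← mul_assoc, ← C_mul, map_mul, hφC, Algebra.smul_def, mul_assoc]
    rw [this]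
    exact hNg.smul _
  -- main induction on the power of w
  have claim : ∀ (m : ℕ) (q : Polynomial k), Nice Dx t (φ q * w ^ m) := by
    intro m
    induction m with
    | zero => intro q; simpa using P_poly q
    | succ m ih =>
      intro q
      rcases Nat.eq_zero_or_pos m with hm | hm
      · subst hm
        have hmod : q %ₘ f + f * (q /ₘ f) = q := modByMonic_add_div q f
        have : φ q * w ^ 1 = φ (q %ₘ f) * w + φ (q /ₘ f) := by
          conv_lhs => rw [← hmod]
          rw [map_add, map_mul, pow_one, add_mul]
          have h2 : φ f * φ (q /ₘ f) * w = φ (q /ₘ f) * (φ f * w) := by ring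
          rw [h2, hw, mul_one]
        rw [this]
        exact (P_lag _ (lt_of_lt_of_le (degree_modByMonic_lt q hmonic) (le_of_eq hdegf))).add
          (P_poly _)
      · -- m ≥ 1
        have hsep : f.Separable := by
          rw [hfdef]
          exact (separable_prod_X_sub_C_iff).mpr hp
        obtain ⟨d, c, hdc⟩ := hsep
        have hmk : (m : k) ≠ 0 := Nat.cast_ne_zero.mpr (by omega)
        set qq : Polynomial k := C (-(m : k)⁻¹) * (q * c) with hqqdef
        clear_value qq
        have hDw : Dx w = -(φ (derivative f) * (w * w)) := by
          have h0 := congrArg Dx hw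
          rw [Derivation.leibniz, Derivation.map_one_eq_zero, hDx' f, smul_eq_mul,
            smul_eq_mul] at h0
          have h1 : φ f * Dx w = -(w * φ (derivative f)) := by linear_combination h0
          calc Dx w = (φ f * w) * Dx w := by rw [hw, one_mul]
          _ = w * (φ f * Dx w) := by ring
          _ = w * -(w * φ (derivative f)) := by rw [h1]
          _ = -(φ (derivative f) * (w * w)) := by ring
        have hDwm : Dx (w ^ m) = -((m : R) * φ (derivative f) * w ^ (m + 1)) := by
          rw [Derivation.leibniz_pow, hDw]
          have hpow : w ^ (m - 1) * (w * w) = w ^ (m + 1) := by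
            have h12 : m - 1 + 2 = m + 1 := by omega
            calc w ^ (m - 1) * (w * w) = w ^ (m - 1) * w ^ 2 := by ring
            _ = w ^ (m - 1 + 2) := (pow_add w _ 2).symm
            _ = w ^ (m + 1) := by rw [h12]
          simp only [smul_neg, smul_eq_mul, nsmul_eq_mul]
          linear_combination (-(m : R) * φ (derivative f)) * hpow
        have hC : (m : Polynomial k) * C (-(m : k)⁻¹) = -1 := by
          rw [← C_eq_natCast, ← C_mul, ← C_1, ← C_neg]
          congr 1
          field_simp
        have hpoly : q + (m : Polynomial k) * qq * derivative f = q * d * f := by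
          rw [hqqdef]
          linear_combination (q * c * derivative f) * hC - q * hdc
        have himg : φ q + (m : R) * φ qq * φ (derivative f) = φ q * φ d * φ f := by
          have h := congrArg φ hpoly
          simp only [map_add, map_mul, map_natCast] at h
          linear_combination h
        have hDqq : Dx (φ qq * w ^ m) =
            φ qq * -((m : R) * φ (derivative f) * w ^ (m + 1)) + w ^ m * φ (derivative qq) := by
          rw [Derivation.leibniz, hDwm, hDx' qq, smul_eq_mul, smul_eq_mul]
        have key : φ q * w ^ (m + 1) =
            Dx (φ qq * w ^ m) + φ (q * d - derivative qq) * w ^ m := by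
          rw [hDqq, map_sub, map_mul]
          linear_combination (w ^ (m + 1)) * himg + (φ q * φ d) * hfw m
        rw [key]
        exact (nice_dx Dx t _).add (ih _)
  -- every element of R is nice
  have final : ∀ g : R, Nice Dx t g := by
    intro g
    obtain ⟨⟨a, s⟩, hs⟩ := IsLocalization.surj (Submonoid.powers f) g
    obtain ⟨e, he⟩ := s.2
    have he' : f ^ e = (↑s : Polynomial k) := he
    have h1 : φ (f ^ e) * w ^ e = 1 := by rw [map_pow, ← mul_pow, hw, one_pow]
    have : g = φ a * w ^ e := by
      calc g = g * (φ (f ^ e) * w ^ e) := by rw [h1, mul_one]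
      _ = (g * φ (f ^ e)) * w ^ e := by ring
      _ = (g * φ ↑s) * w ^ e := by rw [he']
      _ = φ a * w ^ e := by rw [hs]
    rw [this]
    exact claim e a
  -- conclude
  obtain ⟨a, b, hab⟩ := final (μ t)
  refine ⟨a • Dx, b • Dx, ?_⟩
  have hxDxeq : xDx = t • Dx := by
    apply aux_ext f
    rw [hxDx, Derivation.smul_apply, hDx, smul_eq_mul, mul_one]
  apply aux_ext f μ _
  rw [hxDxeq]
  show μ t = (⁅Dx, a • Dx⁆ + ⁅t • Dx, b • Dx⁆) t
  rw [Derivation.add_apply, Derivation.commutator_apply, Derivation.commutator_apply]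
  simp only [Derivation.smul_apply, smul_eq_mul, hDx, mul_one, Derivation.map_one_eq_zero,
    mul_zero, sub_zero]
  rw [hab]
end

section
/- Let E ⊂ k[x^{±1}, y^{±1}] be the subspace of Laurent polynomials with zero constant term, with the Poisson bracket {x^k y^ℓ, x^m y^n} = (kn - ℓm) x^{k+m} y^{ℓ+n}. Then every element of E is a single Poisson bracket of two elements of E; in particular E = {E, E} and the Lie algebra E has bracket width one. -/
/-- The Poisson bracket on the Laurent polynomial algebra `k[x^{±1}, y^{±1}]`
(modelled as the group algebra of `ℤ × ℤ`), determined on monomials by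
`{x^k y^ℓ, x^m y^n} = (kn - ℓm)·x^{k+m} y^{ℓ+n}` and extended bilinearly. -/
noncomputable def pb {k : Type*} [Field k]
    (f g : AddMonoidAlgebra k (ℤ × ℤ)) : AddMonoidAlgebra k (ℤ × ℤ) :=
  Finsupp.sum f.coeff fun a c => Finsupp.sum g.coeff fun b d =>
    AddMonoidAlgebra.single (a + b) (((a.1 * b.2 - a.2 * b.1 : ℤ) : k) * (c * d))

/-- Let `E ⊂ k[x^{±1}, y^{±1}]` be the subspace of Laurent polynomials with
zero constant term.  Every element of `E` is a single Poisson bracket of two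
elements of `E`; in particular `E = {E, E}` and the Lie algebra `E` has
bracket width one. -/
theorem laurent_zero_const_width_one
    (k : Type*) [Field k] [CharZero k]
    (f : AddMonoidAlgebra k (ℤ × ℤ)) (hf : f.coeff ((0 : ℤ), (0 : ℤ)) = 0) :
    ∃ g h : AddMonoidAlgebra k (ℤ × ℤ),
      g.coeff ((0 : ℤ), (0 : ℤ)) = 0 ∧ h.coeff ((0 : ℤ), (0 : ℤ)) = 0 ∧ f = pb g h := by
  classical
  set N : ℤ := (f.coeff.support.sup fun a => a.2.natAbs) + 1 with hN
  have hNpos : 0 < N := by positivity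
  set p : ℤ × ℤ := (1, N) with hp
  -- key nonvanishing
  have key : ∀ a ∈ f.coeff.support, (a.2 - N * a.1 : ℤ) ≠ 0 := by
    intro a ha
    have hne : a ≠ ((0:ℤ),(0:ℤ)) := by
      rintro rfl; exact (Finsupp.mem_support_iff.mp ha) hf
    have h1 : (a.2.natAbs : ℤ) ≤ ((f.coeff.support.sup fun a => a.2.natAbs : ℕ) : ℤ) := by
      exact_mod_cast Finset.le_sup (f := fun a : ℤ × ℤ => a.2.natAbs) ha
    have h3 : |a.2| < N := by rw [Int.abs_eq_natAbs]; omega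
    intro heq
    rcases eq_or_ne a.1 0 with h0 | h0
    · have : a.2 = 0 := by rw [h0, mul_zero] at heq; omega
      exact hne (Prod.ext h0 this)
    · have h4 : 1 ≤ |a.1| := Int.one_le_abs h0
      have h2 : |a.2| = N * |a.1| := by
        rw [show a.2 = N * a.1 by omega, abs_mul, abs_of_pos hNpos]
      nlinarith
  set D : ℤ × ℤ → k := fun a => ((a.2 - N * a.1 : ℤ) : k) with hD
  have keyk : ∀ a ∈ f.coeff.support, D a ≠ 0 := fun a ha =>
    Int.cast_ne_zero.mpr (key a ha)
  refine ⟨AddMonoidAlgebra.single p 1,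
    AddMonoidAlgebra.ofCoeff (f.coeff.sum fun a c => Finsupp.single (a - p) (c / D a)), ?_, ?_, ?_⟩
  · simp [AddMonoidAlgebra.coeff_single, Finsupp.single_apply, hp]
  · rw [AddMonoidAlgebra.coeff_ofCoeff, Finsupp.sum_apply]
    apply Finset.sum_eq_zero
    intro a ha
    simp only [Finsupp.single_apply]
    have hap : a ≠ p := by
      intro h
      exact key a ha (by simp [h, hp])
    rw [if_neg (fun h : a - p = ((0 : ℤ), (0 : ℤ)) => hap (sub_eq_zero.mp h))]

  · rw [pb]
    rw [AddMonoidAlgebra.coeff_single, Finsupp.sum_single_index (by simp)]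
    rw [AddMonoidAlgebra.coeff_ofCoeff, Finsupp.sum_sum_index (by simp) (by intros; simp [mul_add])]
    conv_lhs => rw [← AddMonoidAlgebra.ofCoeff_coeff f, ← Finsupp.sum_single f.coeff, AddMonoidAlgebra.ofCoeff_finsuppSum]
    apply Finsupp.sum_congr
    intro a ha
    rw [Finsupp.sum_single_index (by simp)]
    have h1 : p + (a - p) = a := by abel
    have h2 : ((p.1 * (a - p).2 - p.2 * (a - p).1 : ℤ) : k) = D a := by
      simp [hD, hp]
      ring_nf
    rw [h1, h2, one_mul, mul_div_cancel₀ _ (keyk a ha), AddMonoidAlgebra.ofCoeff_single]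
end

section
/- The Lie algebra E of Laurent polynomials in k[x^{±1}, y^{±1}] with zero constant term, under the Poisson bracket {x^k y^ℓ, x^m y^n} = (kn - ℓm)x^{k+m}y^{ℓ+n}, is simple: every nonzero Lie ideal equals E. -/
namespace LZCS

/-- The symplectic form on `ℤ × ℤ`. -/
def om (u v : ℤ × ℤ) : ℤ := u.1 * v.2 - u.2 * v.1

variable {k : Type*} [Field k]

/-- Adjoint action of the monomial `x^{b.1} y^{b.2}`. -/
noncomputable def adm (b : ℤ × ℤ) (f : AddMonoidAlgebra k (ℤ × ℤ)) :
    AddMonoidAlgebra k (ℤ × ℤ) :=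
  f.coeff.sum fun a d => AddMonoidAlgebra.single (b + a) (((om b a : ℤ) : k) * d)

/-- Diagonal operator with integer weights. -/
noncomputable def diag (w : ℤ × ℤ → ℤ) (f : AddMonoidAlgebra k (ℤ × ℤ)) :
    AddMonoidAlgebra k (ℤ × ℤ) :=
  f.coeff.sum fun a d => AddMonoidAlgebra.single a (((w a : ℤ) : k) * d)

lemma adm_single (b a : ℤ × ℤ) (d : k) :
    adm b (AddMonoidAlgebra.single a d) = AddMonoidAlgebra.single (b + a) (((om b a : ℤ) : k) * d) := by
  rw [adm, AddMonoidAlgebra.coeff_single, Finsupp.sum_single_index]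
  rw [mul_zero, AddMonoidAlgebra.single_zero]

lemma diag_single (w : ℤ × ℤ → ℤ) (a : ℤ × ℤ) (d : k) :
    diag w (AddMonoidAlgebra.single a d) = AddMonoidAlgebra.single a (((w a : ℤ) : k) * d) := by
  rw [diag, AddMonoidAlgebra.coeff_single, Finsupp.sum_single_index]
  rw [mul_zero, AddMonoidAlgebra.single_zero]

lemma adm_zero (b : ℤ × ℤ) : adm b (0 : AddMonoidAlgebra k (ℤ × ℤ)) = 0 := by
  rw [adm, AddMonoidAlgebra.coeff_zero, Finsupp.sum_zero_index]

lemma diag_zero (w : ℤ × ℤ → ℤ) : diag w (0 : AddMonoidAlgebra k (ℤ × ℤ)) = 0 := by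
  rw [diag, AddMonoidAlgebra.coeff_zero, Finsupp.sum_zero_index]

lemma adm_add (b : ℤ × ℤ) (f g : AddMonoidAlgebra k (ℤ × ℤ)) :
    adm b (f + g) = adm b f + adm b g := by
  unfold adm
  rw [AddMonoidAlgebra.coeff_add]
  apply Finsupp.sum_add_index'
  · intro a; rw [mul_zero, AddMonoidAlgebra.single_zero]
  · intro a d₁ d₂; rw [mul_add, AddMonoidAlgebra.single_add]

lemma diag_add (w : ℤ × ℤ → ℤ) (f g : AddMonoidAlgebra k (ℤ × ℤ)) :
    diag w (f + g) = diag w f + diag w g := by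
  unfold diag
  rw [AddMonoidAlgebra.coeff_add]
  apply Finsupp.sum_add_index'
  · intro a; rw [mul_zero, AddMonoidAlgebra.single_zero]
  · intro a d₁ d₂; rw [mul_add, AddMonoidAlgebra.single_add]

lemma pb_single (b : ℤ × ℤ) (f : AddMonoidAlgebra k (ℤ × ℤ)) :
    pb (AddMonoidAlgebra.single b (1 : k)) f = adm b f := by
  unfold pb adm
  rw [AddMonoidAlgebra.coeff_single, Finsupp.sum_single_index]
  · apply Finsupp.sum_congr
    intro a _
    rw [one_mul]
    rfl
  · simp

lemma diag_apply (w : ℤ × ℤ → ℤ) (f : AddMonoidAlgebra k (ℤ × ℤ)) (a : ℤ × ℤ) :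
    (diag w f).coeff a = ((w a : ℤ) : k) * f.coeff a := by
  induction f using AddMonoidAlgebra.induction_linear with
  | zero => simp [diag_zero]
  | add f g hf hg =>
      rw [diag_add, AddMonoidAlgebra.coeff_add, AddMonoidAlgebra.coeff_add, Finsupp.add_apply, Finsupp.add_apply, hf, hg]; ring
  | single a' d =>
      rw [diag_single]
      rcases eq_or_ne a' a with rfl | h
      · simp [AddMonoidAlgebra.coeff_single]
      · simp [AddMonoidAlgebra.coeff_single, Finsupp.single_apply, h]

lemma adm_adm_adm (b : ℤ × ℤ) (f : AddMonoidAlgebra k (ℤ × ℤ)) :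
    adm (-(b + b)) (adm b (adm b f)) = diag (fun a => -2 * (om b a) ^ 3) f := by
  induction f using AddMonoidAlgebra.induction_linear with
  | zero => rw [adm_zero, adm_zero, adm_zero, diag_zero]
  | add f g hf hg => rw [adm_add, adm_add, adm_add, diag_add, hf, hg]
  | single a d =>
      rw [adm_single, adm_single, adm_single, diag_single]
      rw [show -(b + b) + (b + (b + a)) = a by abel]
      congr 1
      simp only [om, Prod.fst_add, Prod.snd_add, Prod.fst_neg, Prod.snd_neg]
      push_cast
      ring

lemma prod_ne_zero {u : ℤ × ℤ} (hu : u ≠ 0) : ¬(u.1 = 0 ∧ u.2 = 0) := by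
  intro h
  exact hu (Prod.ext_iff.mpr ⟨h.1, h.2⟩)

section Ideal

variable {I : Submodule k (AddMonoidAlgebra k (ℤ × ℤ))}
variable (hideal : ∀ f ∈ I, ∀ g : AddMonoidAlgebra k (ℤ × ℤ),
      g.coeff ((0 : ℤ), (0 : ℤ)) = 0 → pb g f ∈ I)

include hideal

lemma adm_mem {b : ℤ × ℤ} (hb : b ≠ 0) {f} (hf : f ∈ I) : adm b f ∈ I := by
  rw [← pb_single]
  refine hideal f hf _ ?_
  rw [AddMonoidAlgebra.coeff_single, Finsupp.single_apply, if_neg]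
  intro h
  exact hb (by rw [h]; rfl)

lemma diag_mem {b : ℤ × ℤ} (hb : b ≠ 0) {f} (hf : f ∈ I) :
    diag (fun a => -2 * (om b a) ^ 3) f ∈ I := by
  rw [← adm_adm_adm]
  have hb2 : -(b + b) ≠ 0 := by
    intro h
    have h2 : b + b = 0 := neg_eq_zero.mp h
    rw [Prod.ext_iff] at h2
    simp only [Prod.fst_add, Prod.snd_add, Prod.fst_zero, Prod.snd_zero] at h2
    exact prod_ne_zero hb ⟨by omega, by omega⟩
  exact adm_mem hideal hb2 (adm_mem hideal hb (adm_mem hideal hb hf))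

/-- From any nonzero element of the ideal, extract a monomial. -/
lemma isolate [CharZero k] :
    ∀ (n : ℕ) (f : AddMonoidAlgebra k (ℤ × ℤ)), f ∈ I → f.coeff.support.card ≤ n →
      ∀ a₀ ∈ f.coeff.support, AddMonoidAlgebra.single a₀ (1 : k) ∈ I := by
  intro n
  induction n with
  | zero =>
      intro f _ hcard a₀ ha₀
      have := Finset.card_pos.mpr ⟨a₀, ha₀⟩
      omega
  | succ n ih =>
      intro f hf hcard a₀ ha₀
      by_cases hsub : f.coeff.support ⊆ {a₀}
      · have hfa : f.coeff a₀ ≠ 0 := Finsupp.mem_support_iff.mp ha₀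
        have hfe : f = AddMonoidAlgebra.single a₀ (f.coeff a₀) :=
            AddMonoidAlgebra.coeff_injective (Finsupp.eq_single_iff.mpr ⟨hsub, rfl⟩)
        generalize hc : f.coeff a₀ = c at hfa hfe
        have : AddMonoidAlgebra.single a₀ (1 : k) = c⁻¹ • f := by
          rw [hfe, AddMonoidAlgebra.smul_single, smul_eq_mul, inv_mul_cancel₀ hfa]
        rw [this]
        exact I.smul_mem _ hf
      · obtain ⟨a', ha', hne⟩ : ∃ a' ∈ f.coeff.support, a' ≠ a₀ := by
          by_contra h
          push_neg at h
          exact hsub fun x hx => Finset.mem_singleton.mpr (h x hx)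
        set u : ℤ × ℤ := a₀ - a' with hu
        have hune : u ≠ 0 := sub_ne_zero.mpr (Ne.symm hne)
        have hune' : ¬(u.1 = 0 ∧ u.2 = 0) := prod_ne_zero hune
        set b : ℤ × ℤ := (-u.2, u.1) with hbdef
        have hbne : b ≠ 0 := by
          intro h
          rw [Prod.ext_iff] at h
          simp only [hbdef, Prod.fst_zero, Prod.snd_zero] at h
          exact hune' ⟨h.2, by omega⟩
        have hx : om b a₀ ≠ om b a' := by
          intro h
          have homu : om b u = 0 := by
            simp only [om, hu, Prod.fst_sub, Prod.snd_sub] at h ⊢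
            ring_nf
            ring_nf at h
            omega
          simp only [om, hbdef] at homu
          apply hune'
          constructor <;> nlinarith [sq_nonneg u.1, sq_nonneg u.2]
        set w : ℤ × ℤ → ℤ := fun a => -2 * (om b a) ^ 3 with hw
        have hwne : w a₀ ≠ w a' := by
          simp only [hw]
          rcases lt_trichotomy (om b a₀) (om b a') with h | h | h
          · nlinarith [sq_nonneg (om b a₀ + om b a'), sq_nonneg (om b a₀ - om b a')]
          · exact absurd h hx
          · nlinarith [sq_nonneg (om b a₀ + om b a'), sq_nonneg (om b a₀ - om b a')]
        set g : AddMonoidAlgebra k (ℤ × ℤ) := diag w f - ((w a' : ℤ) : k) • f with hg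
        have hgI : g ∈ I := I.sub_mem (diag_mem hideal hbne hf) (I.smul_mem _ hf)
        have hgap : ∀ a, g.coeff a = (((w a : ℤ) : k) - ((w a' : ℤ) : k)) * f.coeff a := by
          intro a
          rw [hg, AddMonoidAlgebra.coeff_sub, Finsupp.sub_apply, AddMonoidAlgebra.coeff_smul, Finsupp.smul_apply, diag_apply, smul_eq_mul]
          ring
        have hga' : g.coeff a' = 0 := by rw [hgap]; ring
        have hga₀ : a₀ ∈ g.coeff.support := by
          rw [Finsupp.mem_support_iff, hgap]
          refine mul_ne_zero ?_ (Finsupp.mem_support_iff.mp ha₀)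
          rw [sub_ne_zero]
          exact_mod_cast hwne
        have hsubg : g.coeff.support ⊆ f.coeff.support := by
          intro a ha
          rw [Finsupp.mem_support_iff] at ha ⊢
          intro h
          exact ha (by rw [hgap, h, mul_zero])
        have hss : g.coeff.support ⊂ f.coeff.support :=
          ⟨hsubg, fun h => (Finsupp.mem_support_iff.mp (h ha')) hga'⟩
        have hcardg : g.coeff.support.card ≤ n := by
          have := Finset.card_lt_card hss
          omega
        exact ih g hgI hcardg a₀ hga₀

/-- Move a monomial within the ideal. -/
lemma step [CharZero k] {a c : ℤ × ℤ} (hI : AddMonoidAlgebra.single a (1 : k) ∈ I)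
    (hom : om c a ≠ 0) : AddMonoidAlgebra.single c (1 : k) ∈ I := by
  have hba : c - a + a = c := by abel
  have hcane : c ≠ a := by
    intro h; apply hom; rw [h, om]; ring
  have hbne : c - a ≠ 0 := sub_ne_zero.mpr hcane
  have h1 : adm (c - a) (AddMonoidAlgebra.single a (1 : k)) ∈ I := adm_mem hideal hbne hI
  rw [adm_single, hba] at h1
  have homeq : om (c - a) a = om c a := by
    simp only [om, Prod.fst_sub, Prod.snd_sub]; ring
  rw [homeq, mul_one] at h1
  have hcast : ((om c a : ℤ) : k) ≠ 0 := Int.cast_ne_zero.mpr hom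
  have : AddMonoidAlgebra.single c (1 : k)
      = ((om c a : ℤ) : k)⁻¹ • AddMonoidAlgebra.single c ((om c a : ℤ) : k) := by
    rw [AddMonoidAlgebra.smul_single, smul_eq_mul, inv_mul_cancel₀ hcast]
  rw [this]
  exact I.smul_mem _ h1

end Ideal

lemma exists_dir {u v : ℤ × ℤ} (hu : u ≠ 0) (hv : v ≠ 0) :
    ∃ d : ℤ × ℤ, om d u ≠ 0 ∧ om v d ≠ 0 := by
  by_contra h
  push_neg at h
  have h1 := h (1, 0)
  have h2 := h (0, 1)
  have h3 := h (1, 1)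
  simp only [om] at h1 h2 h3
  have hu' := prod_ne_zero hu
  have hv' := prod_ne_zero hv
  norm_num at h1 h2 h3
  omega

end LZCS

open LZCS in
/-- The Lie algebra `E` of Laurent polynomials in `k[x^{±1}, y^{±1}]` with zero
constant term, under the Poisson bracket
`{x^k y^ℓ, x^m y^n} = (kn - ℓm)·x^{k+m} y^{ℓ+n}`, is simple: every nonzero Lie
ideal of `E` (a subspace `I ⊆ E` stable under bracketing with all of `E`)
equals `E`. -/
theorem laurent_zero_const_simple
    (k : Type*) [Field k] [IsAlgClosed k] [CharZero k]
    (I : Submodule k (AddMonoidAlgebra k (ℤ × ℤ)))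
    (hIE : ∀ f ∈ I, f.coeff ((0 : ℤ), (0 : ℤ)) = 0)
    (hideal : ∀ f ∈ I, ∀ g : AddMonoidAlgebra k (ℤ × ℤ),
      g.coeff ((0 : ℤ), (0 : ℤ)) = 0 → pb g f ∈ I)
    (hne : ∃ f ∈ I, f ≠ 0) :
    ∀ g : AddMonoidAlgebra k (ℤ × ℤ), g.coeff ((0 : ℤ), (0 : ℤ)) = 0 → g ∈ I := by
  obtain ⟨f₀, hf₀I, hf₀ne⟩ := hne
  obtain ⟨a₀, ha₀⟩ : ∃ a₀, a₀ ∈ f₀.coeff.support := by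
    by_contra h
    push_neg at h
    exact hf₀ne (AddMonoidAlgebra.coeff_eq_zero.mp
        (Finsupp.support_eq_empty.mp (Finset.eq_empty_iff_forall_notMem.mpr h)))
  have hmon : AddMonoidAlgebra.single a₀ (1 : k) ∈ I :=
    isolate hideal f₀.coeff.support.card f₀ hf₀I le_rfl a₀ ha₀
  have ha₀ne : a₀ ≠ 0 := by
    intro h
    have h0 := hIE f₀ hf₀I
    rw [show ((0 : ℤ), (0 : ℤ)) = (0 : ℤ × ℤ) from rfl, ← h] at h0
    exact Finsupp.mem_support_iff.mp ha₀ h0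
  have hall : ∀ c : ℤ × ℤ, c ≠ 0 → AddMonoidAlgebra.single c (1 : k) ∈ I := by
    intro c hc
    obtain ⟨d, hd1, hd2⟩ := exists_dir ha₀ne hc
    have hdne : d ≠ 0 := by
      intro h
      apply hd1
      rw [h, om]
      simp
    exact step hideal (step hideal hmon hd1) hd2
  intro g hg
  rw [← AddMonoidAlgebra.sum_coeff_single g]
  refine Submodule.finsuppSum_mem (R := k) I g.coeff _ fun a ha => ?_
  have hane : a ≠ 0 := by
    intro h
    apply ha
    rw [h]
    exact hg
  have : AddMonoidAlgebra.single a (g.coeff a) = g.coeff a • AddMonoidAlgebra.single a (1 : k) := by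
    rw [AddMonoidAlgebra.smul_single, smul_eq_mul, mul_one]
  rw [this]
  exact I.smul_mem _ (hall a hane)
end

section
/- Let D_p = {xy = p(z)} with deg p = 2, p having simple roots, and let E = x·k[x,z] ⊕ y·k[y,z] ⊕ {(r(z)p(z))' : r ∈ k[z]} ⊂ O(D_p) with the Poisson bracket determined by {x,z}=x, {y,z}=-y, {x,y}=p'(z). Then every element of E can be written as a sum of at most two Poisson brackets of elements of E; i.e., the bracket width of E is at most two. -/
open Polynomial MvPolynomial
set_option maxHeartbeats 1000000
set_option synthInstance.maxHeartbeats 100000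

set_option linter.unusedSectionVars false
section aux
variable {k : Type*} [Field k] [CharZero k] {A : Type*} [CommRing A] [Algebra k A]

lemma myd_one (d : A →ₗ[k] A) (hd : ∀ g h, d (g * h) = g * d h + h * d g) : d 1 = 0 := by
  have h2 : d 1 = d 1 + d 1 := by simpa using hd 1 1
  exact (left_eq_add.mp h2)

lemma myd_algebraMap (d : A →ₗ[k] A) (hd : ∀ g h, d (g * h) = g * d h + h * d g) (c : k) :
    d (algebraMap k A c) = 0 := by
  rw [Algebra.algebraMap_eq_smul_one, map_smul, myd_one d hd, smul_zero]

lemma myd_polyAeval (d : A →ₗ[k] A) (hd : ∀ g h, d (g * h) = g * d h + h * d g)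
    (t : A) (q : Polynomial k) :
    d (Polynomial.aeval t q) = Polynomial.aeval t (derivative q) * d t := by
  induction q using Polynomial.induction_on with
  | C c => simp [myd_algebraMap d hd]
  | add q r hq hr => simp only [map_add, hq, hr]; ring
  | monomial n c ih =>
      have : (Polynomial.C c : k[X]) * Polynomial.X ^ (n + 1)
          = (Polynomial.C c * Polynomial.X ^ n) * Polynomial.X := by ring
      rw [this, map_mul, Polynomial.aeval_X, hd, ih]
      simp only [derivative_mul, derivative_C, derivative_X, derivative_X_pow, map_add, map_mul,
        map_pow, Polynomial.aeval_X, Polynomial.aeval_C, map_natCast, zero_mul, mul_one]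
      ring

lemma myd_mvAeval (d : A →ₗ[k] A) (hd : ∀ g h, d (g * h) = g * d h + h * d g)
    (u v : A) (a : MvPolynomial (Fin 2) k) :
    d (MvPolynomial.aeval ![u, v] a)
      = MvPolynomial.aeval ![u, v] (pderiv 0 a) * d u
        + MvPolynomial.aeval ![u, v] (pderiv 1 a) * d v := by
  induction a using MvPolynomial.induction_on with
  | C c => simp [MvPolynomial.aeval_C, myd_algebraMap d hd, pderiv_C]
  | add q r hq hr => simp only [map_add, hq, hr]; ring
  | mul_X q i ih =>
      rw [map_mul, hd, ih]
      fin_cases i <;>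
        simp [pderiv_mul, Matrix.cons_val_zero, Matrix.cons_val_one] <;> ring

lemma phi_surj (a : MvPolynomial (Fin 2) k) :
    ∃ A : MvPolynomial (Fin 2) k, A + MvPolynomial.X 0 * pderiv 0 A = a := by
  induction a using MvPolynomial.induction_on' with
  | monomial s c =>
      refine ⟨monomial s (c / (s 0 + 1)), ?_⟩
      rw [pderiv_monomial]
      rcases Nat.eq_zero_or_pos (s 0) with h | h
      · simp [h]
      · have hs : Finsupp.single (0 : Fin 2) 1 + (s - Finsupp.single (0 : Fin 2) 1) = s := by
          rw [add_comm]
          exact tsub_add_cancel_of_le (Finsupp.single_le_iff.mpr h)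
        have hX : (MvPolynomial.X (0 : Fin 2) : MvPolynomial (Fin 2) k)
            * MvPolynomial.monomial (s - Finsupp.single (0 : Fin 2) 1)
                (c / ((s 0 : k) + 1) * (s 0 : k)) =
            MvPolynomial.monomial s (c / ((s 0 : k) + 1) * (s 0 : k)) := by
          rw [← pow_one (MvPolynomial.X (0 : Fin 2) : MvPolynomial (Fin 2) k),
            ← monomial_single_add, hs]
        rw [hX, ← (MvPolynomial.monomial s).map_add]
        congr 1
        have hne : ((s 0 : k) + 1) ≠ 0 := by
          have : ((s 0 + 1 : ℕ) : k) ≠ 0 := Nat.cast_ne_zero.mpr (Nat.succ_ne_zero _)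
          simpa using this
        field_simp
        ring
  | add q r hq hr =>
      obtain ⟨Aq, hAq⟩ := hq
      obtain ⟨Ar, hAr⟩ := hr
      refine ⟨Aq + Ar, ?_⟩
      rw [map_add]
      linear_combination hAq + hAr

end aux

/-- Let `D_p = {xy = p(z)}` with `deg p = 2` and `p` with simple roots, and let
`E = x·k[x,z] ⊕ y·k[y,z] ⊕ {(r(z)p(z))' : r ∈ k[z]} ⊂ O(D_p)`, with the
Poisson bracket (a bilinear biderivation `B`) determined by `{x,z} = x`,
`{y,z} = -y`, `{x,y} = p'(z)`.  Then every element of `E` is a sum of at most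
two Poisson brackets of elements of `E`: the bracket width of `E` is ≤ 2. -/
theorem danielewski_deg_two_width_le_two
    (k : Type*) [Field k] [IsAlgClosed k] [CharZero k]
    (p : Polynomial k) (hdeg : p.natDegree = 2) (hp : Squarefree p) :
    let P := MvPolynomial (Fin 3) k
    let rel : P := X 0 * X 1 - Polynomial.aeval (X 2) p
    let A := P ⧸ Ideal.span {rel}
    let mk := Ideal.Quotient.mk (Ideal.span {rel})
    let xb : A := mk (X 0)
    let yb : A := mk (X 1)
    let zb : A := mk (X 2)
    let InE : A → Prop := fun e =>
      ∃ (a b : MvPolynomial (Fin 2) k) (r : Polynomial k),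
        e = xb * MvPolynomial.aeval ![xb, zb] a
            + yb * MvPolynomial.aeval ![yb, zb] b
            + Polynomial.aeval zb (derivative (r * p))
    ∀ (B : A →ₗ[k] A →ₗ[k] A)
      (_ : ∀ f g, B f g = - B g f)
      (_ : ∀ f g h, B f (g * h) = g * B f h + h * B f g)
      (_ : B xb zb = xb) (_ : B yb zb = - yb)
      (_ : B xb yb = Polynomial.aeval zb (derivative p)),
    ∀ e : A, InE e →
      ∃ f₁ g₁ f₂ g₂ : A, InE f₁ ∧ InE g₁ ∧ InE f₂ ∧ InE g₂ ∧
        e = B f₁ g₁ + B f₂ g₂ := by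
  intro P rel A mk xb yb zb InE B hanti hleib hxz hyz hxy e he
  obtain ⟨a, b, r, he⟩ := he
  -- basic facts about p
  have hp0 : p ≠ 0 := fun h => by simp [h] at hdeg
  have hp2 : p.coeff 2 ≠ 0 := by
    have := Polynomial.leadingCoeff_ne_zero.mpr hp0
    rwa [Polynomial.leadingCoeff, hdeg] at this
  set q : Polynomial k := derivative p with hqdef
  have hqdeg : q.natDegree ≤ 1 := by
    rw [hqdef]
    have := Polynomial.natDegree_derivative_le p
    omega
  set c1 : k := q.coeff 1 with hc1def
  set c0 : k := q.coeff 0 with hc0def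
  have hqeq : q = Polynomial.C c1 * Polynomial.X + Polynomial.C c0 :=
    Polynomial.eq_X_add_C_of_natDegree_le_one hqdeg
  have hc1 : c1 ≠ 0 := by
    have : q.coeff 1 = p.coeff 2 * 2 := by
      rw [hqdef, Polynomial.coeff_derivative]; norm_num
    rw [hc1def, this]
    exact mul_ne_zero hp2 two_ne_zero
  -- the derivation d = B · zb in the first slot
  set d : A →ₗ[k] A := (LinearMap.flip B) zb with hddef
  have hdapp : ∀ f : A, d f = B f zb := fun f => rfl
  have hD : ∀ g h : A, d (g * h) = g * d h + h * d g := by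
    intro g h
    simp only [hdapp]
    rw [hanti (g * h) zb, hleib zb g h, hanti zb g, hanti zb h]
    ring
  have hdzb : d zb = 0 := by
    have h2 : d zb + d zb = 0 := by
      have := hanti zb zb
      simp only [hdapp]
      linear_combination this
    calc d zb = ((2 : k)⁻¹ * 2) • d zb := by
          rw [inv_mul_cancel₀ (two_ne_zero : (2 : k) ≠ 0), one_smul]
      _ = (2 : k)⁻¹ • (d zb + d zb) := by rw [mul_smul, two_smul]
      _ = 0 := by rw [h2, smul_zero]
  have hdxb : d xb = xb := hxz
  have hdyb : d yb = - yb := hyz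
  -- key computation for d on E-elements
  have hmv0 : (MvPolynomial.aeval ![xb, zb]) (MvPolynomial.X 0 : MvPolynomial (Fin 2) k) = xb := by
    simp
  have keyx : ∀ a' : MvPolynomial (Fin 2) k,
      d (xb * MvPolynomial.aeval ![xb, zb] a')
        = xb * MvPolynomial.aeval ![xb, zb] (a' + MvPolynomial.X 0 * pderiv 0 a') := by
    intro a'
    rw [hD, myd_mvAeval d hD xb zb a', hdxb, hdzb, map_add, map_mul]
    simp only [hmv0]
    ring
  have keyy : ∀ b' : MvPolynomial (Fin 2) k,
      d (yb * MvPolynomial.aeval ![yb, zb] b')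
        = - (yb * MvPolynomial.aeval ![yb, zb] (b' + MvPolynomial.X 0 * pderiv 0 b')) := by
    intro b'
    rw [hD, myd_mvAeval d hD yb zb b', hdyb, hdzb, map_add, map_mul]
    have : (MvPolynomial.aeval ![yb, zb]) (MvPolynomial.X 0 : MvPolynomial (Fin 2) k) = yb := by simp
    simp only [this]
    ring
  -- choose preimages
  obtain ⟨A', hA'⟩ := phi_surj (k := k) (MvPolynomial.C c1⁻¹ * a)
  obtain ⟨B'', hB''⟩ := phi_surj (k := k) (-(MvPolynomial.C c1⁻¹ * b))
  set f₁ : A := xb * MvPolynomial.aeval ![xb, zb] A' + yb * MvPolynomial.aeval ![yb, zb] B''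
    with hf₁def
  set g₁ : A := Polynomial.aeval zb q with hg₁def
  set g₂ : A := yb * Polynomial.aeval zb r with hg₂def
  have hdf₁ : d f₁ = algebraMap k A c1⁻¹ * (xb * MvPolynomial.aeval ![xb, zb] a
      + yb * MvPolynomial.aeval ![yb, zb] b) := by
    rw [hf₁def, map_add, keyx, keyy, hA', hB'']
    rw [map_neg, map_mul, map_mul, MvPolynomial.aeval_C, MvPolynomial.aeval_C]
    ring
  -- B f g₁ = algebraMap c1 * B f zb
  have hBg₁ : ∀ f : A, B f g₁ = algebraMap k A c1 * B f zb := by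
    intro f
    have halg : ∀ c : k, B f (algebraMap k A c) = 0 :=
      myd_algebraMap (B f) (hleib f)
    rw [hg₁def, hqeq]
    simp only [map_add, map_mul, Polynomial.aeval_X, Polynomial.aeval_C]
    rw [hleib f, halg c1, halg c0]
    ring
  have hBuck1 : B f₁ g₁ = xb * MvPolynomial.aeval ![xb, zb] a
      + yb * MvPolynomial.aeval ![yb, zb] b := by
    rw [hBg₁ f₁, ← hdapp, hdf₁, ← mul_assoc, ← map_mul,
      mul_inv_cancel₀ hc1, map_one, one_mul]
  -- the relation xb * yb = p(zb)
  have hrel : xb * yb = Polynomial.aeval zb p := by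
    have h0 : mk rel = 0 :=
      Ideal.Quotient.eq_zero_iff_mem.mpr (Ideal.subset_span (Set.mem_singleton rel))
    have h1 : mk (X 0 * X 1) - mk (Polynomial.aeval (X 2) p) = 0 := by
      rw [← map_sub]; exact h0
    have : mk (X 0 * X 1) = mk (Polynomial.aeval (X 2) p) := sub_eq_zero.mp h1
    have hmk : mk (Polynomial.aeval (X 2) p) = Polynomial.aeval zb p := by
      have := Polynomial.aeval_algHom_apply
        (Ideal.Quotient.mkₐ k (Ideal.span {rel})) (X 2 : P) p
      simpa [Ideal.Quotient.mkₐ_eq_mk] using this.symm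
    calc xb * yb = mk (X 0 * X 1) := by rw [map_mul]
    _ = Polynomial.aeval zb p := by rw [this, hmk]
  have hBuck2 : B xb g₂ = Polynomial.aeval zb (derivative (r * p)) := by
    rw [hg₂def, hleib xb]
    rw [myd_polyAeval (B xb) (hleib xb) zb r, hxz, hxy]
    rw [Polynomial.derivative_mul, map_add, map_mul, map_mul]
    rw [← hrel]
    ring
  refine ⟨f₁, g₁, xb, g₂, ?_, ?_, ?_, ?_, ?_⟩
  · exact ⟨A', B'', 0, by simp [hf₁def]⟩
  · refine ⟨0, 0, 1, ?_⟩
    simp [hg₁def, hqdef]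
  · refine ⟨1, 0, 0, ?_⟩
    simp
  · refine ⟨0, Polynomial.aeval (MvPolynomial.X 1 : MvPolynomial (Fin 2) k) r, 0, ?_⟩
    have : (MvPolynomial.aeval ![yb, zb])
          (Polynomial.aeval (MvPolynomial.X 1 : MvPolynomial (Fin 2) k) r)
        = Polynomial.aeval zb r := by
      rw [← Polynomial.aeval_algHom_apply (MvPolynomial.aeval ![yb, zb])
        (MvPolynomial.X 1 : MvPolynomial (Fin 2) k) r]
      simp
    simp [hg₂def, this]
  · rw [hBuck1, hBuck2, he]
end
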